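/- For the Poisson bracket on polynomials in two variables given by {f,g} = (x²+y²)·(∂ₓf ∂ᵧg − ∂ᵧf ∂ₓg), a polynomial f is a Casimir if and only if f is constant. -/

import Mathlib

noncomputable section
open MvPolynomial

/-- The Poisson bracket of the quadratic Poisson structure P₃ = (x²+y²) ∂ₓ∧∂ᵧ on ℝ[x,y]. -/
def pb3 (f g : MvPolynomial (Fin 2) ℝ) : MvPolynomial (Fin 2) ℝ :=
  (X 0 ^ 2 + X 1 ^ 2) * (pderiv 0 f * pderiv 1 g - pderiv 1 f * pderiv 0 g)

lemma coeff_pderiv_aux (i : Fin 2) (m : Fin 2 →₀ ℕ) (f : MvPolynomial (Fin 2) ℝ) :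
    coeff m (pderiv i f) = (m i + 1) * coeff (m + Finsupp.single i 1) f := by
  induction f using MvPolynomial.induction_on' with
  | monomial s a =>
    rw [pderiv_monomial, coeff_monomial, coeff_monomial]
    by_cases h : s = m + Finsupp.single i 1
    · subst h
      have h1 : m + Finsupp.single i 1 - Finsupp.single i 1 = m :=
        add_tsub_cancel_right m _
      have h2 : ((m + Finsupp.single i 1 : Fin 2 →₀ ℕ)) i = m i + 1 := by
        rw [Finsupp.add_apply, Finsupp.single_eq_same]
      rw [h1, h2, if_pos rfl, if_pos rfl]; push_cast; ring
    · rw [if_neg h]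
      by_cases h2 : s - Finsupp.single i 1 = m
      · rw [if_pos h2]
        by_cases h3 : s i = 0
        · simp [h3]
        · exfalso; apply h
          rw [← h2, tsub_add_cancel_of_le
            (Finsupp.single_le_iff.mpr (by omega))]
      · rw [if_neg h2]; ring
  | add p q hp hq =>
    simp only [map_add, coeff_add, hp, hq]; ring

lemma eq_C_of_pderiv (f : MvPolynomial (Fin 2) ℝ)
    (h0 : pderiv 0 f = 0) (h1 : pderiv 1 f = 0) : f = C (coeff 0 f) := by
  have key : ∀ (i : Fin 2) (m : Fin 2 →₀ ℕ), pderiv i f = 0 →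
      coeff (m + Finsupp.single i 1) f = 0 := by
    intro i m hi
    have := coeff_pderiv_aux i m f
    rw [hi, coeff_zero] at this
    have hne : (m i : ℝ) + 1 ≠ 0 := by positivity
    field_simp at this
    exact (mul_eq_zero.mp this.symm).resolve_left hne
  ext m
  rw [coeff_C]
  by_cases hm : (0 : Fin 2 →₀ ℕ) = m
  · rw [if_pos hm, hm]
  · rw [if_neg hm]
    have : m 0 ≠ 0 ∨ m 1 ≠ 0 := by
      by_contra hc
      push_neg at hc
      apply hm
      ext j
      fin_cases j <;> simp [hc.1, hc.2]
    rcases this with h | h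
    · have hm' : m = (m - Finsupp.single 0 1) + Finsupp.single 0 1 :=
        (tsub_add_cancel_of_le (Finsupp.single_le_iff.mpr (by omega))).symm
      rw [hm']; exact key 0 _ h0
    · have hm' : m = (m - Finsupp.single 1 1) + Finsupp.single 1 1 :=
        (tsub_add_cancel_of_le (Finsupp.single_le_iff.mpr (by omega))).symm
      rw [hm']; exact key 1 _ h1

lemma quad_ne_zero : (X 0 ^ 2 + X 1 ^ 2 : MvPolynomial (Fin 2) ℝ) ≠ 0 := by
  intro h
  have := congrArg (coeff (Finsupp.single (0 : Fin 2) 2)) h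
  rw [coeff_add, coeff_zero, coeff_X_pow, coeff_X_pow] at this
  simp [Finsupp.single_eq_single_iff] at this

/-- f is a Casimir of P₃ = (x²+y²) ∂ₓ∧∂ᵧ iff f is a constant. -/
theorem casimir_P3_iff_const (f : MvPolynomial (Fin 2) ℝ) :
    (∀ g : MvPolynomial (Fin 2) ℝ, pb3 f g = 0) ↔ ∃ c : ℝ, f = C c := by
  constructor
  · intro h
    have h0 : pderiv 0 f = 0 := by
      have := h (X 1)
      unfold pb3 at this
      rw [pderiv_X_self, pderiv_X_of_ne (by decide)] at this
      rw [mul_one, mul_zero, sub_zero] at this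
      exact (mul_eq_zero.mp this).resolve_left quad_ne_zero
    have h1 : pderiv 1 f = 0 := by
      have := h (X 0)
      unfold pb3 at this
      rw [pderiv_X_self, pderiv_X_of_ne (by decide)] at this
      rw [mul_one, mul_zero, zero_sub, mul_neg, neg_eq_zero] at this
      exact (mul_eq_zero.mp this).resolve_left quad_ne_zero
    exact ⟨coeff 0 f, eq_C_of_pderiv f h0 h1⟩
  · rintro ⟨c, rfl⟩ g
    unfold pb3
    simp [pderiv_C]
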